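/- Let V be a 4-dimensional ℂ-vector space and let f be an endomorphism of V whose matrix in some basis of V is diag(J(−1,2), J(1,2)). Then there is a basis of the 6-dimensional space ⋀²V in which the induced endomorphism ⋀²f has matrix diag(J(−1,3), J(−1,1), J(1,1), J(1,1)). -/

import Mathlib

/-- The `n × n` Jordan block with eigenvalue `lam`: every diagonal entry is `lam` and every
entry directly above the diagonal is `1`. -/
def jordanBlock (lam : ℂ) (n : ℕ) : Matrix (Fin n) (Fin n) ℂ :=
  Matrix.of fun i j : Fin n =>
    if (j : ℕ) = (i : ℕ) then lam else if (j : ℕ) = (i : ℕ) + 1 then 1 else 0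

/-- The wedge `v ∧ w` as an element of the second exterior power `⋀[ℂ]^2 V`. -/
def wedge {V : Type*} [AddCommGroup V] [Module ℂ V] (v w : V) : ⋀[ℂ]^2 V :=
  ⟨ExteriorAlgebra.ι ℂ v * ExteriorAlgebra.ι ℂ w, by
    show _ ∈ LinearMap.range (ExteriorAlgebra.ι ℂ (M := V)) ^ 2
    rw [pow_two]
    exact Submodule.mul_mem_mul (LinearMap.mem_range_self _ v) (LinearMap.mem_range_self _ w)⟩


namespace ESJ
open ExteriorAlgebra

variable {V : Type*} [AddCommGroup V] [Module ℂ V]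

lemma wedge_add_left (u v w : V) : wedge (u + v) w = wedge u w + wedge v w :=
  Subtype.ext <| by simp [wedge, add_mul]

lemma wedge_add_right (u v w : V) : wedge u (v + w) = wedge u v + wedge u w :=
  Subtype.ext <| by simp [wedge, mul_add]

lemma wedge_smul_left (a : ℂ) (v w : V) : wedge (a • v) w = a • wedge v w :=
  Subtype.ext <| by simp [wedge, smul_mul_assoc]

lemma wedge_smul_right (a : ℂ) (v w : V) : wedge v (a • w) = a • wedge v w :=
  Subtype.ext <| by simp [wedge, mul_smul_comm]

lemma wedge_neg_left (v w : V) : wedge (-v) w = -wedge v w :=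
  Subtype.ext <| by simp [wedge, neg_mul]

lemma wedge_neg_right (v w : V) : wedge v (-w) = -wedge v w :=
  Subtype.ext <| by simp [wedge, mul_neg]

lemma wedge_sub_left (u v w : V) : wedge (u - v) w = wedge u w - wedge v w :=
  Subtype.ext <| by simp [wedge, sub_mul]

lemma wedge_sub_right (u v w : V) : wedge u (v - w) = wedge u v - wedge u w :=
  Subtype.ext <| by simp [wedge, mul_sub]

lemma wedge_self (v : V) : wedge v v = 0 :=
  Subtype.ext <| by simp [wedge, ι_sq_zero]

lemma wedge_comm (v w : V) : wedge w v = -wedge v w :=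
  Subtype.ext <| by
    show ι ℂ w * ι ℂ v = -(ι ℂ v * ι ℂ w)
    rw [eq_neg_iff_add_eq_zero, add_comm]
    exact ι_add_mul_swap v w

/-- `wedge` as a bilinear map. -/
noncomputable def Wedge : V →ₗ[ℂ] V →ₗ[ℂ] ⋀[ℂ]^2 V :=
  LinearMap.mk₂ ℂ wedge wedge_add_left wedge_smul_left wedge_add_right wedge_smul_right

lemma ιMulti_two (v : Fin 2 → V) : ιMulti ℂ 2 v = ι ℂ (v 0) * ι ℂ (v 1) := by
  simp [ιMulti_apply, List.ofFn_succ, Matrix.vecTail]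

variable {κ : Type*} [Fintype κ] (B : Module.Basis κ ℂ V)

lemma span_wedge_top (S : Submodule ℂ (⋀[ℂ]^2 V))
    (hS : ∀ i j : κ, wedge (B i) (B j) ∈ S) : ⊤ ≤ S := by
  have hw : ∀ v w : V, wedge v w ∈ S := by
    intro v w
    have : wedge v w = ∑ i, ∑ j, (B.repr v i * B.repr w j) • wedge (B i) (B j) := by
      calc wedge v w = Wedge (∑ i, B.repr v i • B i) (∑ j, B.repr w j • B j) := by
            rw [B.sum_repr, B.sum_repr]; rfl
        _ = _ := by
            simp only [map_sum, LinearMap.sum_apply, map_smul, LinearMap.smul_apply,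
              Finset.smul_sum, smul_smul]
            rw [Finset.sum_comm]
            refine Finset.sum_congr rfl fun i _ => Finset.sum_congr rfl fun j _ => ?_
            rw [mul_comm]
            rfl
    rw [this]
    exact Submodule.sum_mem _ fun i _ => Submodule.sum_mem _ fun j _ =>
      Submodule.smul_mem _ _ (hS i j)
  intro x _
  have hx : (x : ExteriorAlgebra ℂ V) ∈ Submodule.map (⋀[ℂ]^2 V).subtype S := by
    have h1 : (x : ExteriorAlgebra ℂ V) ∈ Submodule.span ℂ (Set.range (ιMulti ℂ 2)) :=
      (ιMulti_span_fixedDegree ℂ 2).ge x.2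
    refine Submodule.span_le.2 ?_ h1
    rintro _ ⟨v, rfl⟩
    exact ⟨wedge (v 0) (v 1), hw _ _, (ιMulti_two v).symm⟩
  obtain ⟨y, hy, hxy⟩ := hx
  rwa [show x = y from Subtype.ext hxy.symm]


variable [DecidableEq κ]

/-- family of alternating maps: degree 2 is the (a,b)-minor determinant of coordinates. -/
noncomputable def fam (a b : κ) : ∀ n : ℕ, V [⋀^Fin n]→ₗ[ℂ] ℂ
  | 2 => (Matrix.detRowAlternating).compLinearMap (LinearMap.pi fun i : Fin 2 => B.coord (![a, b] i))
  | _ => 0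

noncomputable def lfun (a b : κ) : (⋀[ℂ]^2 V) →ₗ[ℂ] ℂ :=
  (ExteriorAlgebra.liftAlternating (fam B a b)).comp (Submodule.subtype _)

lemma lfun_wedge (a b : κ) (v w : V) :
    lfun B a b (wedge v w) = B.coord a v * B.coord b w - B.coord b v * B.coord a w := by
  have h : (wedge v w : ExteriorAlgebra ℂ V) = ιMulti ℂ 2 ![v, w] := by
    rw [ιMulti_two]; rfl
  rw [lfun, LinearMap.comp_apply, Submodule.subtype_apply, h,
    liftAlternating_apply_ιMulti]
  show Matrix.det (Matrix.of fun i j => B.coord (![a,b] j) (![v,w] i)) = _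
  rw [Matrix.det_fin_two]
  simp

lemma lfun_wedge_basis (a b i j : κ) :
    lfun B a b (wedge (B i) (B j)) =
      (if a = i then 1 else 0) * (if b = j then 1 else 0)
        - (if b = i then 1 else 0) * (if a = j then 1 else 0) := by
  rw [lfun_wedge]
  simp [Module.Basis.coord_apply, Module.Basis.repr_self, Finsupp.single_apply, eq_comm]

end ESJ

open ESJ in
set_option maxHeartbeats 2000000 in
set_option synthInstance.maxHeartbeats 400000 in
/-- If the matrix of the endomorphism `f` of the 4-dimensional ℂ-vector space `V` in some basis is diag(J(−1,2), J(1,2)), then in some basis of the 6-dimensional space ⋀²V the induced endomorphism ⋀²f (characterized by `v ∧ w ↦ f v ∧ f w`) has matrix diag(J(−1,3), J(−1,1), J(1,1), J(1,1)). -/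
theorem exterior_square_jordan_Jm1_2_J1_2 (V : Type*) [AddCommGroup V] [Module ℂ V]
    (hdim : Module.finrank ℂ V = 4)
    (f : V →ₗ[ℂ] V)
    (B : Module.Basis (Fin 2 ⊕ Fin 2) ℂ V)
    (hB : LinearMap.toMatrix B B f = Matrix.fromBlocks (jordanBlock (-1) 2) 0 0 (jordanBlock 1 2))
    (g : (⋀[ℂ]^2 V) →ₗ[ℂ] (⋀[ℂ]^2 V))
    (hg : ∀ v w : V, g (wedge v w) = wedge (f v) (f w)) :
    ∃ C : Module.Basis (Fin 3 ⊕ (Fin 1 ⊕ (Fin 1 ⊕ Fin 1))) ℂ (⋀[ℂ]^2 V),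
      LinearMap.toMatrix C C g = Matrix.fromBlocks (jordanBlock (-1) 3) 0 0 (Matrix.fromBlocks (jordanBlock (-1) 1) 0 0 (Matrix.fromBlocks (jordanBlock 1 1) 0 0 (jordanBlock 1 1))) := by
  classical
  have hft : Matrix.toLin B B (Matrix.fromBlocks (jordanBlock (-1) 2) 0 0 (jordanBlock 1 2)) = f := by
    rw [← hB, Matrix.toLin_toMatrix]
  have hfB : ∀ j, f (B j) =
      ∑ i, (Matrix.fromBlocks (jordanBlock (-1) 2) 0 0 (jordanBlock 1 2)) i j • B i := by
    intro j; rw [← hft, Matrix.toLin_self]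
  have hf1 : f (B (Sum.inl 0)) = -(B (Sum.inl 0)) := by
    rw [hfB]
    simp [Fintype.sum_sum_type, Fin.sum_univ_two, jordanBlock, Matrix.fromBlocks]
  have hf2 : f (B (Sum.inl 1)) = B (Sum.inl 0) - B (Sum.inl 1) := by
    rw [hfB]
    simp [Fintype.sum_sum_type, Fin.sum_univ_two, jordanBlock, Matrix.fromBlocks]
    try module
  have hf3 : f (B (Sum.inr 0)) = B (Sum.inr 0) := by
    rw [hfB]
    simp [Fintype.sum_sum_type, Fin.sum_univ_two, jordanBlock, Matrix.fromBlocks]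
  have hf4 : f (B (Sum.inr 1)) = B (Sum.inr 0) + B (Sum.inr 1) := by
    rw [hfB]
    simp [Fintype.sum_sum_type, Fin.sum_univ_two, jordanBlock, Matrix.fromBlocks]
    try module
  -- action of g on basis wedges
  have hw12 : g (wedge (B (Sum.inl 0)) (B (Sum.inl 1))) = wedge (B (Sum.inl 0)) (B (Sum.inl 1)) := by
    rw [hg, hf1, hf2]
    simp [wedge_neg_left, wedge_sub_right, wedge_self]
  have hw13 : g (wedge (B (Sum.inl 0)) (B (Sum.inr 0))) = -(wedge (B (Sum.inl 0)) (B (Sum.inr 0))) := by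
    rw [hg, hf1, hf3]
    simp [wedge_neg_left]
  have hw14 : g (wedge (B (Sum.inl 0)) (B (Sum.inr 1))) =
      -(wedge (B (Sum.inl 0)) (B (Sum.inr 0))) - wedge (B (Sum.inl 0)) (B (Sum.inr 1)) := by
    rw [hg, hf1, hf4]
    simp only [wedge_neg_left, wedge_add_right]
    module
  have hw23 : g (wedge (B (Sum.inl 1)) (B (Sum.inr 0))) =
      wedge (B (Sum.inl 0)) (B (Sum.inr 0)) - wedge (B (Sum.inl 1)) (B (Sum.inr 0)) := by
    rw [hg, hf2, hf3]
    simp [wedge_sub_left]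
  have hw24 : g (wedge (B (Sum.inl 1)) (B (Sum.inr 1))) =
      wedge (B (Sum.inl 0)) (B (Sum.inr 0)) + wedge (B (Sum.inl 0)) (B (Sum.inr 1))
        - wedge (B (Sum.inl 1)) (B (Sum.inr 0)) - wedge (B (Sum.inl 1)) (B (Sum.inr 1)) := by
    rw [hg, hf2, hf4]
    simp only [wedge_sub_left, wedge_add_right]
    module
  have hw34 : g (wedge (B (Sum.inr 0)) (B (Sum.inr 1))) = wedge (B (Sum.inr 0)) (B (Sum.inr 1)) := by
    rw [hg, hf3, hf4]
    simp [wedge_add_right, wedge_self]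
  -- the candidate Jordan basis of the exterior square
  set c : (Fin 3 ⊕ (Fin 1 ⊕ (Fin 1 ⊕ Fin 1))) → ⋀[ℂ]^2 V :=
    Sum.elim
      ![(-2 : ℂ) • wedge (B (Sum.inl 0)) (B (Sum.inr 0)),
        wedge (B (Sum.inl 0)) (B (Sum.inr 0)) + wedge (B (Sum.inl 0)) (B (Sum.inr 1))
          - wedge (B (Sum.inl 1)) (B (Sum.inr 0)),
        wedge (B (Sum.inl 1)) (B (Sum.inr 1))]
      (Sum.elim ![wedge (B (Sum.inl 0)) (B (Sum.inr 1)) + wedge (B (Sum.inl 1)) (B (Sum.inr 0))]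
        (Sum.elim ![wedge (B (Sum.inl 0)) (B (Sum.inl 1))]
          ![wedge (B (Sum.inr 0)) (B (Sum.inr 1))])) with hc
  -- memberships
  have hmem : ∀ j, c j ∈ Submodule.span ℂ (Set.range c) :=
    fun j => Submodule.subset_span ⟨j, rfl⟩
  have m13 : wedge (B (Sum.inl 0)) (B (Sum.inr 0)) ∈ Submodule.span ℂ (Set.range c) := by
    have h : wedge (B (Sum.inl 0)) (B (Sum.inr 0)) = (-2⁻¹ : ℂ) • c (Sum.inl 0) := by
      show _ = (-2⁻¹ : ℂ) • ((-2 : ℂ) • wedge (B (Sum.inl 0)) (B (Sum.inr 0)))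
      module
    rw [h]; exact Submodule.smul_mem _ _ (hmem _)
  have m14 : wedge (B (Sum.inl 0)) (B (Sum.inr 1)) ∈ Submodule.span ℂ (Set.range c) := by
    have h : wedge (B (Sum.inl 0)) (B (Sum.inr 1)) =
        (4⁻¹ : ℂ) • c (Sum.inl 0) + (2⁻¹ : ℂ) • c (Sum.inl 1)
          + (2⁻¹ : ℂ) • c (Sum.inr (Sum.inl 0)) := by
      show wedge (B (Sum.inl 0)) (B (Sum.inr 1)) =
        (4⁻¹ : ℂ) • ((-2 : ℂ) • wedge (B (Sum.inl 0)) (B (Sum.inr 0)))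
          + (2⁻¹ : ℂ) • (wedge (B (Sum.inl 0)) (B (Sum.inr 0)) + wedge (B (Sum.inl 0)) (B (Sum.inr 1))
              - wedge (B (Sum.inl 1)) (B (Sum.inr 0)))
          + (2⁻¹ : ℂ) • (wedge (B (Sum.inl 0)) (B (Sum.inr 1)) + wedge (B (Sum.inl 1)) (B (Sum.inr 0)))
      module
    rw [h]
    exact Submodule.add_mem _ (Submodule.add_mem _ (Submodule.smul_mem _ _ (hmem _))
      (Submodule.smul_mem _ _ (hmem _))) (Submodule.smul_mem _ _ (hmem _))
  have m23 : wedge (B (Sum.inl 1)) (B (Sum.inr 0)) ∈ Submodule.span ℂ (Set.range c) := by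
    have h : wedge (B (Sum.inl 1)) (B (Sum.inr 0)) =
        (-4⁻¹ : ℂ) • c (Sum.inl 0) + (-2⁻¹ : ℂ) • c (Sum.inl 1)
          + (2⁻¹ : ℂ) • c (Sum.inr (Sum.inl 0)) := by
      show wedge (B (Sum.inl 1)) (B (Sum.inr 0)) =
        (-4⁻¹ : ℂ) • ((-2 : ℂ) • wedge (B (Sum.inl 0)) (B (Sum.inr 0)))
          + (-2⁻¹ : ℂ) • (wedge (B (Sum.inl 0)) (B (Sum.inr 0)) + wedge (B (Sum.inl 0)) (B (Sum.inr 1))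
              - wedge (B (Sum.inl 1)) (B (Sum.inr 0)))
          + (2⁻¹ : ℂ) • (wedge (B (Sum.inl 0)) (B (Sum.inr 1)) + wedge (B (Sum.inl 1)) (B (Sum.inr 0)))
      module
    rw [h]
    exact Submodule.add_mem _ (Submodule.add_mem _ (Submodule.smul_mem _ _ (hmem _))
      (Submodule.smul_mem _ _ (hmem _))) (Submodule.smul_mem _ _ (hmem _))
  have m24 : wedge (B (Sum.inl 1)) (B (Sum.inr 1)) ∈ Submodule.span ℂ (Set.range c) := hmem (Sum.inl 2)
  have m12 : wedge (B (Sum.inl 0)) (B (Sum.inl 1)) ∈ Submodule.span ℂ (Set.range c) :=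
    hmem (Sum.inr (Sum.inr (Sum.inl 0)))
  have m34 : wedge (B (Sum.inr 0)) (B (Sum.inr 1)) ∈ Submodule.span ℂ (Set.range c) :=
    hmem (Sum.inr (Sum.inr (Sum.inr 0)))
  have hS : ∀ i j : Fin 2 ⊕ Fin 2, wedge (B i) (B j) ∈ Submodule.span ℂ (Set.range c) := by
    intro i j
    rcases i with i | i <;> rcases j with j | j <;> fin_cases i <;> fin_cases j <;>
      first
        | exact m12 | exact m13 | exact m14 | exact m23 | exact m24 | exact m34
        | (rw [wedge_self]; exact Submodule.zero_mem _)
        | (rw [wedge_comm]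
           first
             | exact Submodule.neg_mem _ m12 | exact Submodule.neg_mem _ m13
             | exact Submodule.neg_mem _ m14 | exact Submodule.neg_mem _ m23
             | exact Submodule.neg_mem _ m24 | exact Submodule.neg_mem _ m34)
  have hsp : ⊤ ≤ Submodule.span ℂ (Set.range c) := span_wedge_top B _ hS
  -- linear independence
  have hli : LinearIndependent ℂ c := by
    rw [Fintype.linearIndependent_iff]
    intro u hu
    have E1 := congrArg (lfun B (Sum.inl 0) (Sum.inr 0)) hu
    have E2 := congrArg (lfun B (Sum.inl 0) (Sum.inr 1)) hu
    have E3 := congrArg (lfun B (Sum.inl 1) (Sum.inr 0)) hu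
    have E4 := congrArg (lfun B (Sum.inl 1) (Sum.inr 1)) hu
    have E5 := congrArg (lfun B (Sum.inl 0) (Sum.inl 1)) hu
    have E6 := congrArg (lfun B (Sum.inr 0) (Sum.inr 1)) hu
    simp only [hc, map_sum, map_smul, map_zero, Fintype.sum_sum_type, Fin.sum_univ_three,
      Fin.sum_univ_one, Sum.elim_inl, Sum.elim_inr, Matrix.cons_val_zero, Matrix.cons_val_one,
      Matrix.head_cons, Matrix.cons_val_two, Matrix.tail_cons, map_add, map_sub, smul_eq_mul,
      lfun_wedge_basis, reduceCtorEq, Sum.inl.injEq, Sum.inr.injEq, if_true, if_false,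
      Fin.isValue] at E1 E2 E3 E4 E5 E6
    norm_num at E1 E2 E3 E4 E5 E6
    intro i
    rcases i with i | i | i <;> fin_cases i
    · show u (Sum.inl 0) = 0
      linear_combination (-2⁻¹ : ℂ) * E1 + (4⁻¹:ℂ) * E2 - (4⁻¹:ℂ) * E3
    · show u (Sum.inl 1) = 0
      linear_combination (2⁻¹ : ℂ) * E2 - (2⁻¹:ℂ) * E3
    · show u (Sum.inl 2) = 0
      linear_combination E4
    · show u (Sum.inr (Sum.inl 0)) = 0
      linear_combination (2⁻¹ : ℂ) * E2 + (2⁻¹:ℂ) * E3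
    · show u (Sum.inr (Sum.inr (Sum.inl 0))) = 0
      linear_combination E5
    · show u (Sum.inr (Sum.inr (Sum.inr 0))) = 0
      linear_combination E6
  refine ⟨Module.Basis.mk hli hsp, ?_⟩
  have hCj : ∀ j, (Module.Basis.mk hli hsp) j = c j := fun j => Module.Basis.mk_apply hli hsp j
  set C := Module.Basis.mk hli hsp with hCdef
  have hgc0 : g (C (Sum.inl 0)) = -C (Sum.inl 0) := by
    simp only [hCj, hc, Sum.elim_inl, Matrix.cons_val_zero]
    rw [map_smul, hw13]
    module
  have hgc1 : g (C (Sum.inl 1)) = C (Sum.inl 0) - C (Sum.inl 1) := by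
    simp only [hCj, hc, Sum.elim_inl, Matrix.cons_val_zero, Matrix.cons_val_one, Matrix.head_cons]
    rw [map_sub, map_add, hw13, hw14, hw23]
    module
  have hgc2 : g (C (Sum.inl 2)) = C (Sum.inl 1) - C (Sum.inl 2) := by
    simp only [hCj, hc, Sum.elim_inl, Matrix.cons_val_zero, Matrix.cons_val_one, Matrix.head_cons,
      Matrix.cons_val_two, Matrix.tail_cons]
    rw [hw24]
    try module
  have hgc3 : g (C (Sum.inr (Sum.inl 0))) = -C (Sum.inr (Sum.inl 0)) := by
    simp only [hCj, hc, Sum.elim_inl, Sum.elim_inr, Matrix.cons_val_zero]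
    rw [map_add, hw14, hw23]
    module
  have hgc4 : g (C (Sum.inr (Sum.inr (Sum.inl 0)))) = C (Sum.inr (Sum.inr (Sum.inl 0))) := by
    simp only [hCj, hc, Sum.elim_inl, Sum.elim_inr, Matrix.cons_val_zero]
    rw [hw12]
  have hgc5 : g (C (Sum.inr (Sum.inr (Sum.inr 0)))) = C (Sum.inr (Sum.inr (Sum.inr 0))) := by
    simp only [hCj, hc, Sum.elim_inl, Sum.elim_inr, Matrix.cons_val_zero]
    rw [hw34]
  ext i j
  rw [LinearMap.toMatrix_apply]
  fin_cases j <;> fin_cases i <;>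
    simp only [Fin.mk_zero, Fin.mk_one, show (⟨2, by omega⟩ : Fin 3) = 2 from rfl] <;>
    simp only [hgc0, hgc1, hgc2, hgc3, hgc4, hgc5, map_sub, map_neg, Module.Basis.repr_self,
      Finsupp.sub_apply, Finsupp.neg_apply, Finsupp.single_apply] <;>
    norm_num [jordanBlock, Fin.ext_iff] <;> simp
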